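/- Let φ ∈ ℝ be an angle that is not an integer multiple of π/2 and that is not exceptional. Then there exist real constants c₅, c₆ > 0 (depending only on φ) and a positive integer M₀ such that for every integer M ≥ M₀ one has c₅·M² ≤ N_φ(M) ≤ c₆·M². -/

import Mathlib

/-- The discretized rotation `r_φ : ℤ² → ℤ²`. -/
noncomputable def rphi (φ : ℝ) (p : ℤ × ℤ) : ℤ × ℤ :=
  (⌊(p.1 : ℝ) * Real.cos φ - (p.2 : ℝ) * Real.sin φ⌋,
   ⌊(p.1 : ℝ) * Real.sin φ + (p.2 : ℝ) * Real.cos φ⌋)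

open Classical in
/-- `N_φ(M)`: the number of lattice points `(n,m)` with `|n|,|m| ≤ M` which are images of
no lattice point under `r_φ`. -/
noncomputable def Ncount (φ : ℝ) (M : ℕ) : ℕ :=
  ((Finset.Icc (-(M : ℤ), -(M : ℤ)) ((M : ℤ), (M : ℤ))).filter
    fun nm => ∀ ab : ℤ × ℤ, rphi φ ab ≠ nm).card

/-- `φ` is exceptional if `sin φ` is irrational and at least one of `cos φ - sin φ`,
`cos φ + sin φ` is rational. -/
def Exceptional (φ : ℝ) : Prop :=
  Irrational (Real.sin φ) ∧
    ((∃ r : ℚ, Real.cos φ - Real.sin φ = (r : ℝ)) ∨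
      (∃ r : ℚ, Real.cos φ + Real.sin φ = (r : ℝ)))


open MeasureTheory Set
open scoped ENNReal

lemma floor_shift (δ : ℝ) (z : ℤ) (x w : ℝ) (hx : |x - z| < δ)
    (hs1 : 0 ≤ x - z → 0 < w) (hs2 : x - z < 0 → w < 0) (hw : |w| ≤ 1 - δ) :
    ⌊x + w⌋ = ⌊x⌋ := by
  have hδ1 : δ ≤ 1 := by have := (abs_nonneg w).trans hw; linarith
  have hxz := abs_lt.mp hx
  have hww := abs_le.mp hw
  rcases le_or_gt 0 (x - z) with h | h
  · have hw' := hs1 h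
    have h1 : ⌊x⌋ = z := Int.floor_eq_iff.mpr ⟨by linarith, by push_cast; linarith⟩
    rw [h1]
    exact Int.floor_eq_iff.mpr ⟨by linarith, by push_cast; linarith⟩
  · have hw' := hs2 h
    have h1 : ⌊x⌋ = z - 1 := Int.floor_eq_iff.mpr ⟨by push_cast; linarith, by push_cast; linarith⟩
    rw [h1]
    exact Int.floor_eq_iff.mpr ⟨by push_cast; linarith, by push_cast; linarith⟩

lemma pick_sign (a b : ℝ) (ha : a ≠ 0) (hb : b ≠ 0) (s t : ℝ) :
    ∃ v : ℤ × ℤ, (v = (1,0) ∨ v = (-1,0) ∨ v = (0,1) ∨ v = (0,-1)) ∧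
      (0 ≤ s → 0 < (v.1:ℝ) * a - v.2 * b) ∧ (s < 0 → (v.1:ℝ) * a - v.2 * b < 0) ∧
      (0 ≤ t → 0 < (v.1:ℝ) * b + v.2 * a) ∧ (t < 0 → (v.1:ℝ) * b + v.2 * a < 0) := by
  rcases le_or_gt 0 s with hs' | hs' <;> rcases le_or_gt 0 t with ht' | ht' <;>
    rcases ha.lt_or_gt with ha' | ha' <;> rcases hb.lt_or_gt with hb' | hb' <;>
    first
      | exact ⟨(1,0), Or.inl rfl, fun h => by push_cast; linarith, fun h => by push_cast; linarith,
          fun h => by push_cast; linarith, fun h => by push_cast; linarith⟩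
      | exact ⟨(-1,0), Or.inr (Or.inl rfl), fun h => by push_cast; linarith,
          fun h => by push_cast; linarith, fun h => by push_cast; linarith,
          fun h => by push_cast; linarith⟩
      | exact ⟨(0,1), Or.inr (Or.inr (Or.inl rfl)), fun h => by push_cast; linarith,
          fun h => by push_cast; linarith, fun h => by push_cast; linarith,
          fun h => by push_cast; linarith⟩
      | exact ⟨(0,-1), Or.inr (Or.inr (Or.inr rfl)), fun h => by push_cast; linarith,
          fun h => by push_cast; linarith, fun h => by push_cast; linarith,
          fun h => by push_cast; linarith⟩

lemma recurrence (α β δ : ℝ) (hδ : 0 < δ) :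
    ∃ K : ℕ, ∀ p : ℤ × ℤ, ∃ q : ℤ × ℤ, |q.1| ≤ (K:ℤ) ∧ |q.2| ≤ (K:ℤ) ∧
      ∃ z : ℤ × ℤ, |((p+q).1 : ℝ) * α - ((p+q).2 : ℝ) * β - z.1| < δ ∧
        |((p+q).1 : ℝ) * β + ((p+q).2 : ℝ) * α - z.2| < δ := by
  haveI : Fact ((0:ℝ) < 1) := ⟨one_pos⟩
  set G : ℤ × ℤ → AddCircle (1:ℝ) × AddCircle (1:ℝ) :=
    fun p => (((p.1 : ℝ) * α - (p.2:ℝ) * β : ℝ), ((p.1 : ℝ) * β + (p.2:ℝ) * α : ℝ)) with hG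
  have Gadd : ∀ p q : ℤ × ℤ, G (p + q) = G p + G q := by
    intro p q
    simp only [hG, Prod.fst_add, Prod.snd_add, Prod.mk_add_mk]
    congr 1 <;> rw [← AddCircle.coe_add] <;> congr 1 <;> push_cast <;> ring
  have Gneg : ∀ p : ℤ × ℤ, G (-p) = - G p := by
    intro p
    simp only [hG, Prod.fst_neg, Prod.snd_neg, Prod.neg_mk]
    congr 1 <;> rw [← AddCircle.coe_neg] <;> congr 1 <;> push_cast <;> ring
  set C := closure (Set.range G) with hC
  have hCcomp : IsCompact C := isClosed_closure.isCompact
  have key : ∀ x, x ∈ C → ∃ q : ℤ × ℤ, dist (G q) (-x) < δ := by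
    intro x hx
    have hrangeneg : -(Set.range G) = Set.range G := by
      ext y
      simp only [Set.mem_neg, Set.mem_range]
      constructor
      · rintro ⟨p, hp⟩; exact ⟨-p, by rw [Gneg, hp, neg_neg]⟩
      · rintro ⟨p, hp⟩; exact ⟨-p, by rw [Gneg, hp]⟩
    have hnx : -x ∈ C := by
      have h1 : -x ∈ -C := Set.neg_mem_neg.mpr hx
      rw [neg_closure, hrangeneg] at h1
      exact h1
    rcases Metric.mem_closure_iff.mp hnx δ hδ with ⟨y, hy, hxy⟩
    rcases hy with ⟨q, rfl⟩
    exact ⟨q, by rwa [dist_comm]⟩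
  classical
  obtain ⟨t, ht⟩ := hCcomp.elim_finite_subcover
    (fun i : {x // x ∈ C} => {y | dist (G (Classical.choose (key i.1 i.2))) (-y) < δ})
    (fun i => isOpen_lt (Continuous.dist continuous_const continuous_neg) continuous_const)
    (fun x hx => Set.mem_iUnion.mpr ⟨⟨x, hx⟩, Classical.choose_spec (key x hx)⟩)
  set f : {x // x ∈ C} → ℕ :=
    fun i => (Classical.choose (key i.1 i.2)).1.natAbs ⊔ (Classical.choose (key i.1 i.2)).2.natAbs
  refine ⟨t.sup f, ?_⟩
  intro p
  have hpC : G p ∈ C := subset_closure ⟨p, rfl⟩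
  obtain ⟨i, hit, hmem⟩ := Set.mem_iUnion₂.mp (ht hpC)
  set q := Classical.choose (key i.1 i.2) with hq
  have hfi : f i ≤ t.sup f := Finset.le_sup hit
  have hq1 : |q.1| ≤ ((t.sup f : ℕ) : ℤ) := by
    rw [Int.abs_eq_natAbs]
    exact_mod_cast le_trans (le_sup_left : q.1.natAbs ≤ f i) hfi
  have hq2 : |q.2| ≤ ((t.sup f : ℕ) : ℤ) := by
    rw [Int.abs_eq_natAbs]
    exact_mod_cast le_trans (le_sup_right : q.2.natAbs ≤ f i) hfi
  refine ⟨q, hq1, hq2, ?_⟩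
  have hdist : dist (G q) (-(G p)) < δ := hmem
  have hnorm : ‖G (p + q)‖ < δ := by
    rw [Gadd, ← dist_zero_right]
    calc dist (G p + G q) 0 = dist (G q) (-(G p)) := by
          rw [dist_eq_norm, dist_eq_norm, sub_zero, sub_neg_eq_add, add_comm]
      _ < δ := hdist
  have h1 : ‖(G (p+q)).1‖ < δ := lt_of_le_of_lt (norm_fst_le _) hnorm
  have h2 : ‖(G (p+q)).2‖ < δ := lt_of_le_of_lt (norm_snd_le _) hnorm
  rw [hG] at h1 h2
  simp only [AddCircle.norm_eq, inv_one, one_mul, mul_one] at h1 h2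
  exact ⟨(round (((p+q).1 : ℝ) * α - ((p+q).2:ℝ) * β),
          round (((p+q).1 : ℝ) * β + ((p+q).2:ℝ) * α)), h1, h2⟩

lemma exists_collision (φ δ : ℝ)
    (hc : Real.cos φ ≠ 0) (hs : Real.sin φ ≠ 0)
    (hbc : |Real.cos φ| ≤ 1 - δ) (hbs : |Real.sin φ| ≤ 1 - δ)
    (p z : ℤ × ℤ)
    (h1 : |(p.1 : ℝ) * Real.cos φ - p.2 * Real.sin φ - z.1| < δ)
    (h2 : |(p.1 : ℝ) * Real.sin φ + p.2 * Real.cos φ - z.2| < δ) :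
    ∃ v : ℤ × ℤ, (v = (1,0) ∨ v = (-1,0) ∨ v = (0,1) ∨ v = (0,-1)) ∧
      rphi φ (p + v) = rphi φ p := by
  obtain ⟨v, hv, s1p, s1n, s2p, s2n⟩ := pick_sign (Real.cos φ) (Real.sin φ) hc hs
    ((p.1 : ℝ) * Real.cos φ - p.2 * Real.sin φ - z.1)
    ((p.1 : ℝ) * Real.sin φ + p.2 * Real.cos φ - z.2)
  refine ⟨v, hv, ?_⟩
  have hb1 : |(v.1:ℝ) * Real.cos φ - v.2 * Real.sin φ| ≤ 1 - δ := by
    rcases hv with rfl | rfl | rfl | rfl <;> push_cast <;>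
      simp only [one_mul, zero_mul, neg_mul, sub_zero, zero_sub, neg_neg, abs_neg] <;>
      first | simpa using hbc | simpa using hbs
  have hb2 : |(v.1:ℝ) * Real.sin φ + v.2 * Real.cos φ| ≤ 1 - δ := by
    rcases hv with rfl | rfl | rfl | rfl <;> push_cast <;>
      simp only [one_mul, zero_mul, neg_mul, add_zero, zero_add, neg_neg, abs_neg] <;>
      first | simpa using hbc | simpa using hbs
  have e1 : ((p+v).1 : ℝ) * Real.cos φ - ((p+v).2 : ℝ) * Real.sin φ
      = ((p.1:ℝ) * Real.cos φ - p.2 * Real.sin φ)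
        + ((v.1:ℝ) * Real.cos φ - v.2 * Real.sin φ) := by
    simp only [Prod.fst_add, Prod.snd_add]; push_cast; ring
  have e2 : ((p+v).1 : ℝ) * Real.sin φ + ((p+v).2 : ℝ) * Real.cos φ
      = ((p.1:ℝ) * Real.sin φ + p.2 * Real.cos φ)
        + ((v.1:ℝ) * Real.sin φ + v.2 * Real.cos φ) := by
    simp only [Prod.fst_add, Prod.snd_add]; push_cast; ring
  have g1 := floor_shift δ z.1 ((p.1:ℝ) * Real.cos φ - p.2 * Real.sin φ)
    ((v.1:ℝ) * Real.cos φ - v.2 * Real.sin φ) h1 s1p s1n hb1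
  have g2 := floor_shift δ z.2 ((p.1:ℝ) * Real.sin φ + p.2 * Real.cos φ)
    ((v.1:ℝ) * Real.sin φ + v.2 * Real.cos φ) h2 s2p s2n hb2
  simp only [rphi]
  rw [e1, e2, g1, g2]

lemma cell_volume (p : ℤ × ℤ) :
    volume ((Set.Ico (p.1:ℝ) (p.1+1)) ×ˢ (Set.Ico (p.2:ℝ) (p.2+1))) = 1 := by
  rw [Measure.volume_eq_prod, Measure.prod_prod, Real.volume_Ico, Real.volume_Ico]
  simp

lemma Tcard_le (φ : ℝ) (M : ℕ) (T : Finset (ℤ × ℤ))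
    (hT : ∀ p ∈ T, ((p.1:ℝ) * Real.cos φ - p.2 * Real.sin φ) ∈ Set.Ico (-(M:ℝ)) (M+1) ∧
                   ((p.1:ℝ) * Real.sin φ + p.2 * Real.cos φ) ∈ Set.Ico (-(M:ℝ)) (M+1)) :
    (T.card : ℝ) ≤ (2*(M:ℝ)+5)^2 := by
  classical
  set L : (ℝ × ℝ) →ₗ[ℝ] (ℝ × ℝ) :=
    Matrix.toLin (Module.Basis.finTwoProd ℝ) (Module.Basis.finTwoProd ℝ)
      !![Real.cos φ, -Real.sin φ; Real.sin φ, Real.cos φ] with hL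
  have hLdet : LinearMap.det L = 1 := by
    rw [hL, LinearMap.det_toLin, Matrix.det_fin_two_of]
    nlinarith [Real.sin_sq_add_cos_sq φ]
  have hLapp : ∀ x : ℝ × ℝ, L x = (Real.cos φ * x.1 - Real.sin φ * x.2,
      Real.sin φ * x.1 + Real.cos φ * x.2) := by
    intro x
    rw [hL, Matrix.toLin_finTwoProd_apply]
    congr 1 <;> ring
  set cell : ℤ × ℤ → Set (ℝ × ℝ) :=
    fun p => (Set.Ico (p.1:ℝ) (p.1+1)) ×ˢ (Set.Ico (p.2:ℝ) (p.2+1)) with hcell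
  have hcellmem : ∀ (p : ℤ × ℤ) (x : ℝ × ℝ), x ∈ cell p →
      ⌊x.1⌋ = p.1 ∧ ⌊x.2⌋ = p.2 := by
    rintro p x ⟨⟨ha1, ha2⟩, ⟨hb1, hb2⟩⟩
    constructor <;> [skip; skip] <;>
      exact Int.floor_eq_iff.mpr ⟨by assumption, by push_cast; linarith⟩
  have hdisj : (↑T : Set (ℤ × ℤ)).PairwiseDisjoint cell := by
    intro p _ q _ hpq
    refine Set.disjoint_left.mpr fun x hxp hxq => hpq ?_
    obtain ⟨e1, e2⟩ := hcellmem p x hxp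
    obtain ⟨f1, f2⟩ := hcellmem q x hxq
    exact Prod.ext (by rw [← e1, f1]) (by rw [← e2, f2])
  have hmeas : ∀ p : ℤ × ℤ, MeasurableSet (cell p) :=
    fun p => measurableSet_Ico.prod measurableSet_Ico
  have hvol : volume (⋃ p ∈ T, cell p) = (T.card : ℝ≥0∞) := by
    rw [measure_biUnion_finset hdisj (fun p _ => hmeas p)]
    simp [cell_volume, hcell]
  set S : Set (ℝ × ℝ) := (Set.Icc (-(M:ℝ)-2) ((M:ℝ)+3)) ×ˢ (Set.Icc (-(M:ℝ)-2) ((M:ℝ)+3))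
    with hS
  have hsub : (⋃ p ∈ T, cell p) ⊆ L ⁻¹' S := by
    rintro x hx
    obtain ⟨p, hpT, hxp⟩ := Set.mem_iUnion₂.mp hx
    obtain ⟨⟨ha1, ha2⟩, ⟨hb1, hb2⟩⟩ := hxp
    obtain ⟨⟨hc1, hc2⟩, ⟨hd1, hd2⟩⟩ := hT p hpT
    have habs : |Real.cos φ| ≤ 1 := Real.abs_cos_le_one φ
    have habs' : |Real.sin φ| ≤ 1 := Real.abs_sin_le_one φ
    have h1 := abs_le.mp habs
    have h2 := abs_le.mp habs'
    have k1 : |Real.cos φ * (x.1 - ↑p.1)| ≤ 1 := by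
      rw [abs_mul]
      exact mul_le_one₀ habs (abs_nonneg _) (by rw [abs_of_nonneg (by linarith)]; linarith)
    have k2 : |Real.sin φ * (x.2 - ↑p.2)| ≤ 1 := by
      rw [abs_mul]
      exact mul_le_one₀ habs' (abs_nonneg _) (by rw [abs_of_nonneg (by linarith)]; linarith)
    have k3 : |Real.sin φ * (x.1 - ↑p.1)| ≤ 1 := by
      rw [abs_mul]
      exact mul_le_one₀ habs' (abs_nonneg _) (by rw [abs_of_nonneg (by linarith)]; linarith)
    have k4 : |Real.cos φ * (x.2 - ↑p.2)| ≤ 1 := by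
      rw [abs_mul]
      exact mul_le_one₀ habs (abs_nonneg _) (by rw [abs_of_nonneg (by linarith)]; linarith)
    have k1' := abs_le.mp k1
    have k2' := abs_le.mp k2
    have k3' := abs_le.mp k3
    have k4' := abs_le.mp k4
    have hr1 : Real.cos φ * x.1 - Real.sin φ * x.2 =
        (↑p.1 * Real.cos φ - ↑p.2 * Real.sin φ)
          + Real.cos φ * (x.1 - ↑p.1) - Real.sin φ * (x.2 - ↑p.2) := by ring
    have hr2 : Real.sin φ * x.1 + Real.cos φ * x.2 =
        (↑p.1 * Real.sin φ + ↑p.2 * Real.cos φ)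
          + Real.sin φ * (x.1 - ↑p.1) + Real.cos φ * (x.2 - ↑p.2) := by ring
    constructor
    · rw [hLapp]
      exact ⟨by simp only; linarith, by simp only; linarith⟩
    · rw [hLapp]
      exact ⟨by simp only; linarith, by simp only; linarith⟩
  have hpre : volume (L ⁻¹' S) = ENNReal.ofReal ((2*(M:ℝ)+5)^2) := by
    have hM : (0:ℝ) ≤ (M:ℝ) := Nat.cast_nonneg M
    rw [MeasureTheory.Measure.addHaar_preimage_linearMap volume (by rw [hLdet]; norm_num) S]
    rw [hS, Measure.volume_eq_prod, Measure.prod_prod, Real.volume_Icc, hLdet,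
      ← ENNReal.ofReal_mul (by linarith)]
    simp only [inv_one, abs_one, ENNReal.ofReal_one, one_mul]
    congr 1
    ring
  have hchain : (T.card : ℝ≥0∞) ≤ ENNReal.ofReal ((2*(M:ℝ)+5)^2) := by
    rw [← hvol, ← hpre]
    exact measure_mono hsub
  have := ENNReal.toReal_le_toReal (by simp) (ENNReal.ofReal_ne_top) |>.mpr hchain
  simpa [ENNReal.toReal_ofReal (by positivity : (0:ℝ) ≤ (2*(M:ℝ)+5)^2)] using this




lemma inj_helper (K a a' b b' : ℤ) (hb : |b| ≤ K) (hb' : |b'| ≤ K)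
    (h : (2*K+1)*a + b = (2*K+1)*a' + b') : a = a' := by
  have hK0 : 0 ≤ K := le_trans (abs_nonneg b) hb
  have h1 := abs_le.mp hb
  have h2 := abs_le.mp hb'
  rcases lt_trichotomy a a' with hlt | he | hlt
  · exfalso
    have : (2*K+1) * 1 ≤ (2*K+1) * (a' - a) :=
      mul_le_mul_of_nonneg_left (by omega) (by omega)
    nlinarith
  · exact he
  · exfalso
    have : (2*K+1) * 1 ≤ (2*K+1) * (a - a') :=
      mul_le_mul_of_nonneg_left (by omega) (by omega)
    nlinarith


lemma sq_sum_bound (x1 x2 a b R S : ℝ) (h : x1^2 + x2^2 = a^2 + b^2)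
    (h1 : |a| ≤ R) (h2 : |b| ≤ R) (hRS : 2*R^2 ≤ S^2) (hS : 0 ≤ S) :
    |x1| ≤ S ∧ |x2| ≤ S := by
  have s1 : a^2 ≤ R^2 := by
    have := pow_le_pow_left₀ (abs_nonneg a) h1 2
    rwa [sq_abs] at this
  have s2 : b^2 ≤ R^2 := by
    have := pow_le_pow_left₀ (abs_nonneg b) h2 2
    rwa [sq_abs] at this
  constructor
  · apply abs_le_of_sq_le_sq _ hS
    nlinarith [sq_nonneg x2]
  · apply abs_le_of_sq_le_sq _ hS
    nlinarith [sq_nonneg x1]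


lemma M48_aux (K M : ℝ) (hK0 : 0 ≤ K) (hM : 5000*(K+1)*(K+1) ≤ M) : 4*K+8 ≤ M := by
  nlinarith [sq_nonneg K]

lemma htrho_aux (K t ρ M : ℝ) (ht0 : 0 ≤ t) (h8 : 8*(K+1)*t ≤ M)
    (hρ2 : M - 4 ≤ 2*ρ) (hM48 : 4*K + 8 ≤ M) : (2*K+1)*t + K ≤ ρ := by linarith


lemma upper_aux (M : ℝ) (hM1 : 1 ≤ M) : (2*M+1)^2 ≤ 9*M^2 := by
  nlinarith [sq_nonneg (M-1)]

lemma final_aux (k t M : ℝ) (hk1 : 1 ≤ k) (ht0 : 0 ≤ t) (hM : 5000*k*k ≤ M)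
    (h8 : M ≤ 8*k*(t+1)) :
    1/(256*k^2) * M^2 ≤ (2*M+1)^2 - (2*M+5)^2 + (2*t+1)^2/2 := by
  have hk0 : (0:ℝ) < k := by linarith
  have hM0 : (0:ℝ) < M := by nlinarith
  have hM1 : (1:ℝ) ≤ M := by nlinarith
  have htl : M - 8*k ≤ 8*k*t := by nlinarith
  have hMk : (0:ℝ) ≤ M - 8*k := by nlinarith
  have h_b : (M-8*k)*(M-8*k) ≤ (8*k*t)*(8*k*t) := mul_self_le_mul_self hMk htl
  have h_a : 5000*k*k*M ≤ M*M := mul_le_mul_of_nonneg_right hM hM0.le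
  have h_c : (0:ℝ) ≤ (k-1)*(k*M) := mul_nonneg (by linarith) (by positivity)
  have h_d : (0:ℝ) ≤ k*k*t := by positivity
  have h_e : (0:ℝ) ≤ k*k := by positivity
  have h_f : (0:ℝ) ≤ (M-1)*(k*k) := mul_nonneg (by linarith) h_e
  rw [one_div, inv_mul_le_iff₀ (by positivity)]
  nlinarith [h_a, h_b, h_c, h_d, h_e, h_f]


lemma parity_flip : ∀ (p v : ℤ × ℤ), (v = (1,0) ∨ v = (-1,0) ∨ v = (0,1) ∨ v = (0,-1)) →
    (((p+v).1 + (p+v).2) % 2 = 0 ↔ ¬((p.1 + p.2) % 2 = 0)) := by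
  intro p v hv
  rcases hv with rfl | rfl | rfl | rfl <;>
    · simp only [Prod.fst_add, Prod.snd_add]
      norm_num
      omega

lemma norm_preserve (φ a b : ℝ) :
    (a * Real.cos φ - b * Real.sin φ)^2 + (a * Real.sin φ + b * Real.cos φ)^2
      = a^2 + b^2 := by
  linear_combination (a^2 + b^2) * (Real.sin_sq_add_cos_sq φ)


set_option maxHeartbeats 2000000 in
theorem Ncount_quadratic (φ : ℝ) (hφ : ∀ k : ℤ, φ ≠ (k : ℝ) * (Real.pi / 2))
    (hexc : ¬ Exceptional φ) :
    ∃ c₅ c₆ : ℝ, 0 < c₅ ∧ 0 < c₆ ∧ ∃ M₀ : ℕ, 0 < M₀ ∧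
      ∀ M : ℕ, M₀ ≤ M → c₅ * (M : ℝ) ^ 2 ≤ (Ncount φ M : ℝ) ∧
        (Ncount φ M : ℝ) ≤ c₆ * (M : ℝ) ^ 2 := by
  classical
  have hsin : Real.sin φ ≠ 0 := by
    intro h
    rcases Real.sin_eq_zero_iff.mp h with ⟨n, hn⟩
    exact hφ (2*n) (by push_cast; linarith)
  have hcos : Real.cos φ ≠ 0 := by
    intro h
    rcases Real.cos_eq_zero_iff.mp h with ⟨n, hn⟩
    exact hφ (2*n+1) (by push_cast; linarith)
  have hpyth : Real.sin φ ^ 2 + Real.cos φ ^ 2 = 1 := Real.sin_sq_add_cos_sq φ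
  have hsin2 : 0 < Real.sin φ ^ 2 :=
    lt_of_le_of_ne (sq_nonneg _) (Ne.symm (pow_ne_zero 2 hsin))
  have hcos2 : 0 < Real.cos φ ^ 2 :=
    lt_of_le_of_ne (sq_nonneg _) (Ne.symm (pow_ne_zero 2 hcos))
  have habscos : |Real.cos φ| < 1 := by
    nlinarith [sq_abs (Real.cos φ), abs_nonneg (Real.cos φ)]
  have habssin : |Real.sin φ| < 1 := by
    nlinarith [sq_abs (Real.sin φ), abs_nonneg (Real.sin φ)]
  set δ : ℝ := 1 - max |Real.cos φ| |Real.sin φ| with hδdef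
  have hδpos : 0 < δ := by
    have := max_lt habscos habssin
    simp only [hδdef]; linarith
  have hbc : |Real.cos φ| ≤ 1 - δ := by
    simp only [hδdef, sub_sub_cancel]; exact le_max_left _ _
  have hbs : |Real.sin φ| ≤ 1 - δ := by
    simp only [hδdef, sub_sub_cancel]; exact le_max_right _ _
  obtain ⟨K, hK⟩ := recurrence (Real.cos φ) (Real.sin φ) δ hδpos
  set k : ℝ := (K : ℝ) + 1 with hkdef
  have hk1 : (1:ℝ) ≤ k := by rw [hkdef]; linarith [Nat.cast_nonneg (α := ℝ) K]
  have hkpos : (0:ℝ) < k := lt_of_lt_of_le one_pos hk1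
  refine ⟨1 / (256 * k^2), 9, by positivity, by norm_num, 5000*(K+1)*(K+1), by positivity, ?_⟩
  intro M hM
  -- basic numeric facts about M
  have hMR : 5000 * k * k ≤ (M:ℝ) := by
    have : ((5000*(K+1)*(K+1) : ℕ) : ℝ) ≤ (M:ℝ) := Nat.cast_le.mpr hM
    push_cast at this
    simp only [hkdef]; linarith
  have hM1 : (1:ℝ) ≤ (M:ℝ) := by nlinarith
  have hM7 : (7:ℝ) ≤ (M:ℝ) := by nlinarith
  have hM0 : (0:ℝ) ≤ (M:ℝ) := by linarith
  set Q := Finset.Icc ((-(M : ℤ), -(M : ℤ)) : ℤ × ℤ) (((M : ℤ), (M : ℤ)) : ℤ × ℤ) with hQ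
  have hQmem : ∀ y : ℤ × ℤ, y ∈ Q ↔ (-(M:ℤ) ≤ y.1 ∧ y.1 ≤ M) ∧ (-(M:ℤ) ≤ y.2 ∧ y.2 ≤ M) := by
    intro y
    rw [hQ, Finset.mem_Icc, Prod.le_def, Prod.le_def]
    tauto
  have hQcard : Q.card = (2*M+1)^2 := by
    have h1 : ((M:ℤ) + 1 - (-(M:ℤ))).toNat = 2*M+1 := by omega
    rw [hQ, Finset.card_Icc_prod]
    simp only [Int.card_Icc, h1]
    ring
  -- bounds from rphi φ ab ∈ Q
  have hfloor : ∀ ab : ℤ × ℤ, rphi φ ab ∈ Q →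
      (|(ab.1:ℝ) * Real.cos φ - ab.2 * Real.sin φ| ≤ (M:ℝ)+1 ∧
       |(ab.1:ℝ) * Real.sin φ + ab.2 * Real.cos φ| ≤ (M:ℝ)+1) ∧
      (((ab.1:ℝ) * Real.cos φ - ab.2 * Real.sin φ) ∈ Set.Ico (-(M:ℝ)) ((M:ℝ)+1) ∧
       ((ab.1:ℝ) * Real.sin φ + ab.2 * Real.cos φ) ∈ Set.Ico (-(M:ℝ)) ((M:ℝ)+1)) := by
    intro ab h
    obtain ⟨⟨h11, h12⟩, ⟨h21, h22⟩⟩ := (hQmem _).mp h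
    have e1 : (rphi φ ab).1 = ⌊(ab.1:ℝ) * Real.cos φ - ab.2 * Real.sin φ⌋ := rfl
    have e2 : (rphi φ ab).2 = ⌊(ab.1:ℝ) * Real.sin φ + ab.2 * Real.cos φ⌋ := rfl
    rw [e1] at h11 h12
    rw [e2] at h21 h22
    have l1 : (-(M:ℝ)) ≤ (ab.1:ℝ) * Real.cos φ - ab.2 * Real.sin φ := by
      have := Int.le_floor.mp h11; push_cast at this ⊢; linarith
    have l2 : (ab.1:ℝ) * Real.cos φ - ab.2 * Real.sin φ < (M:ℝ)+1 := by
      have h' := Int.lt_floor_add_one ((ab.1:ℝ) * Real.cos φ - ab.2 * Real.sin φ)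
      have : ((⌊(ab.1:ℝ) * Real.cos φ - ab.2 * Real.sin φ⌋ : ℤ) : ℝ) ≤ (M:ℝ) := by
        exact_mod_cast h12
      linarith
    have l3 : (-(M:ℝ)) ≤ (ab.1:ℝ) * Real.sin φ + ab.2 * Real.cos φ := by
      have := Int.le_floor.mp h21; push_cast at this ⊢; linarith
    have l4 : (ab.1:ℝ) * Real.sin φ + ab.2 * Real.cos φ < (M:ℝ)+1 := by
      have h' := Int.lt_floor_add_one ((ab.1:ℝ) * Real.sin φ + ab.2 * Real.cos φ)
      have : ((⌊(ab.1:ℝ) * Real.sin φ + ab.2 * Real.cos φ⌋ : ℤ) : ℝ) ≤ (M:ℝ) := by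
        exact_mod_cast h22
      linarith
    refine ⟨⟨abs_le.mpr ⟨by linarith, by linarith⟩, abs_le.mpr ⟨by linarith, by linarith⟩⟩,
      ⟨⟨l1, l2⟩, ⟨l3, l4⟩⟩⟩
  set T := (Finset.Icc ((-(2*(M:ℤ)+2), -(2*(M:ℤ)+2)) : ℤ × ℤ)
      ((2*(M:ℤ)+2, 2*(M:ℤ)+2) : ℤ × ℤ)).filter (fun p => rphi φ p ∈ Q) with hT
  have hQT : ∀ ab : ℤ × ℤ, rphi φ ab ∈ Q → ab ∈ T := by
    intro ab h
    obtain ⟨⟨ha1, ha2⟩, -⟩ := hfloor ab h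
    have hsum := norm_preserve φ (ab.1:ℝ) (ab.2:ℝ)
    obtain ⟨hb1, hb2⟩ := sq_sum_bound (ab.1:ℝ) (ab.2:ℝ)
      ((ab.1:ℝ) * Real.cos φ - ab.2 * Real.sin φ) ((ab.1:ℝ) * Real.sin φ + ab.2 * Real.cos φ)
      ((M:ℝ)+1) (2*(M:ℝ)+2) hsum.symm ha1 ha2 (by nlinarith [sq_nonneg ((M:ℝ)+1)]) (by linarith)
    have hib1 : |ab.1| ≤ 2*(M:ℤ)+2 := by exact_mod_cast hb1
    have hib2 : |ab.2| ≤ 2*(M:ℤ)+2 := by exact_mod_cast hb2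
    have hib1' := abs_le.mp hib1
    have hib2' := abs_le.mp hib2
    rw [hT, Finset.mem_filter, Finset.mem_Icc]
    exact ⟨⟨⟨by omega, by omega⟩, ⟨by omega, by omega⟩⟩, h⟩
  have hTbound : (T.card : ℝ) ≤ (2*(M:ℝ)+5)^2 := by
    apply Tcard_le φ M T
    intro p hp
    have hpQ : rphi φ p ∈ Q := by
      rw [hT, Finset.mem_filter] at hp; exact hp.2
    exact (hfloor p hpQ).2
  -- the radius for good points
  set ρ : ℤ := (M:ℤ)/2 - 1 with hρdef
  have hρ1 : 2*ρ ≤ (M:ℤ) - 2 := by omega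
  have hρ2 : (M:ℤ) - 4 ≤ 2*ρ := by omega
  have hρR1 : 2*(ρ:ℝ) ≤ (M:ℝ) - 2 := by exact_mod_cast hρ1
  have hρR2 : (M:ℝ) - 4 ≤ 2*(ρ:ℝ) := by exact_mod_cast hρ2
  have hboxQ : ∀ p : ℤ × ℤ, |p.1| ≤ ρ → |p.2| ≤ ρ → rphi φ p ∈ Q := by
    intro p h1 h2
    have h1R : |(p.1:ℝ)| ≤ (ρ:ℝ) := by exact_mod_cast h1
    have h2R : |(p.2:ℝ)| ≤ (ρ:ℝ) := by exact_mod_cast h2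
    have hsum := norm_preserve φ (p.1:ℝ) (p.2:ℝ)
    have hρ0 : (0:ℝ) ≤ 2*(ρ:ℝ) := by linarith
    have hρsq := mul_self_le_mul_self hρ0 hρR1
    have hM49 : (7:ℝ)*7 ≤ (M:ℝ)*(M:ℝ) :=
      mul_le_mul hM7 hM7 (by norm_num) (by linarith)
    have hkey : 2*(ρ:ℝ)^2 ≤ ((M:ℝ)-1)^2 := by linarith [hρsq, hM49]
    obtain ⟨hx1, hx2⟩ := sq_sum_bound
      ((p.1:ℝ) * Real.cos φ - p.2 * Real.sin φ) ((p.1:ℝ) * Real.sin φ + p.2 * Real.cos φ)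
      (p.1:ℝ) (p.2:ℝ) (ρ:ℝ) ((M:ℝ)-1) hsum h1R h2R hkey (by linarith)
    have hx1' := abs_le.mp hx1
    have hx2' := abs_le.mp hx2
    rw [hQmem]
    constructor
    · constructor
      · rw [show (rphi φ p).1 = ⌊(p.1:ℝ) * Real.cos φ - p.2 * Real.sin φ⌋ from rfl]
        rw [Int.le_floor]; push_cast; linarith
      · rw [show (rphi φ p).1 = ⌊(p.1:ℝ) * Real.cos φ - p.2 * Real.sin φ⌋ from rfl]
        have := Int.floor_le ((p.1:ℝ) * Real.cos φ - p.2 * Real.sin φ)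
        have : ((⌊(p.1:ℝ) * Real.cos φ - p.2 * Real.sin φ⌋ : ℤ) : ℝ) ≤ (M:ℝ) := by linarith
        exact_mod_cast this
    · constructor
      · rw [show (rphi φ p).2 = ⌊(p.1:ℝ) * Real.sin φ + p.2 * Real.cos φ⌋ from rfl]
        rw [Int.le_floor]; push_cast; linarith
      · rw [show (rphi φ p).2 = ⌊(p.1:ℝ) * Real.sin φ + p.2 * Real.cos φ⌋ from rfl]
        have := Int.floor_le ((p.1:ℝ) * Real.sin φ + p.2 * Real.cos φ)
        have : ((⌊(p.1:ℝ) * Real.sin φ + p.2 * Real.cos φ⌋ : ℤ) : ℝ) ≤ (M:ℝ) := by linarith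
        exact_mod_cast this
  -- the good set
  set Gd := (Finset.Icc ((-ρ, -ρ) : ℤ × ℤ) ((ρ, ρ) : ℤ × ℤ)).filter
      (fun p => rphi φ p ∈ Q ∧ ∃ v : ℤ × ℤ,
        (v = (1,0) ∨ v = (-1,0) ∨ v = (0,1) ∨ v = (0,-1)) ∧
        rphi φ (p + v) = rphi φ p) with hGd
  -- grid parameter
  set t : ℕ := M / (8*(K+1)) with htdef
  have ht1 : 8*(K+1)*t ≤ M := by
    rw [htdef, mul_comm]
    exact Nat.div_mul_le_self _ _
  have ht2 : M < 8*(K+1)*(t+1) := by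
    rw [htdef]
    have h := Nat.div_add_mod M (8*(K+1))
    have h2 := Nat.mod_lt M (show 0 < 8*(K+1) by positivity)
    calc M = 8*(K+1) * (M/(8*(K+1))) + M % (8*(K+1)) := h.symm
      _ < 8*(K+1) * (M/(8*(K+1))) + 8*(K+1) := by exact Nat.add_lt_add_left h2 _
      _ = 8*(K+1) * (M/(8*(K+1)) + 1) := by ring
  have ht1R : 8*k*(t:ℝ) ≤ (M:ℝ) := by
    have : ((8*(K+1)*t : ℕ) : ℝ) ≤ (M:ℝ) := Nat.cast_le.mpr ht1
    push_cast at this; simp only [hkdef]; linarith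
  have ht2R : (M:ℝ) ≤ 8*k*((t:ℝ)+1) := by
    have : ((M:ℕ) : ℝ) ≤ ((8*(K+1)*(t+1) : ℕ) : ℝ) := Nat.cast_le.mpr (le_of_lt ht2)
    push_cast at this; simp only [hkdef]; linarith
  have ht0R : (0:ℝ) ≤ (t:ℝ) := Nat.cast_nonneg t
  have hKR : (0:ℝ) ≤ (K:ℝ) := Nat.cast_nonneg K
  have hM48 : 4*(K:ℝ) + 8 ≤ (M:ℝ) := by
    apply M48_aux _ _ hKR
    simp only [hkdef] at hMR
    linarith
  have htρ : (2*(K:ℤ)+1)*(t:ℤ) + K ≤ ρ := by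
    have hgoal : (2*(K:ℝ)+1)*(t:ℝ) + (K:ℝ) ≤ (ρ:ℝ) := by
      apply htrho_aux (K:ℝ) (t:ℝ) (ρ:ℝ) (M:ℝ) ht0R _ hρR2 hM48
      simp only [hkdef] at ht1R
      linarith
    exact_mod_cast hgoal
  -- count of good points
  have hGdcard : (2*t+1)^2 ≤ Gd.card := by
    set g : ℤ × ℤ → ℤ × ℤ := fun i =>
      ((2*(K:ℤ)+1)*i.1, (2*(K:ℤ)+1)*i.2)
        + Classical.choose (hK ((2*(K:ℤ)+1)*i.1, (2*(K:ℤ)+1)*i.2)) with hg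
    have hcard : (Finset.Icc ((-(t:ℤ), -(t:ℤ)) : ℤ × ℤ) (((t:ℤ), (t:ℤ)) : ℤ × ℤ)).card
        = (2*t+1)^2 := by
      have h1 : ((t:ℤ) + 1 - (-(t:ℤ))).toNat = 2*t+1 := by omega
      rw [Finset.card_Icc_prod]
      simp only [Int.card_Icc, h1]
      ring
    rw [← hcard]
    apply Finset.card_le_card_of_injOn g
    · intro i hi
      rw [Finset.mem_coe, Finset.mem_Icc, Prod.le_def, Prod.le_def] at hi
      obtain ⟨⟨hi1, hi2⟩, ⟨hi3, hi4⟩⟩ := hi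
      obtain ⟨hq1, hq2, z, hz1, hz2⟩ := Classical.choose_spec (hK ((2*(K:ℤ)+1)*i.1, (2*(K:ℤ)+1)*i.2))
      set q := Classical.choose (hK ((2*(K:ℤ)+1)*i.1, (2*(K:ℤ)+1)*i.2)) with hqd
      have hbox1 : |(g i).1| ≤ ρ := by
        have : (g i).1 = (2*(K:ℤ)+1)*i.1 + q.1 := rfl
        rw [this]
        calc |(2*(K:ℤ)+1)*i.1 + q.1| ≤ |(2*(K:ℤ)+1)*i.1| + |q.1| := abs_add_le _ _
          _ = (2*(K:ℤ)+1)*|i.1| + |q.1| := by rw [abs_mul, abs_of_nonneg (by positivity : (0:ℤ) ≤ 2*(K:ℤ)+1)]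
          _ ≤ (2*(K:ℤ)+1)*(t:ℤ) + K := by
              have : |i.1| ≤ (t:ℤ) := abs_le.mpr ⟨hi1, hi3⟩
              have h2 : (2*(K:ℤ)+1)*|i.1| ≤ (2*(K:ℤ)+1)*(t:ℤ) :=
                mul_le_mul_of_nonneg_left this (by positivity)
              omega
          _ ≤ ρ := htρ
      have hbox2 : |(g i).2| ≤ ρ := by
        have : (g i).2 = (2*(K:ℤ)+1)*i.2 + q.2 := rfl
        rw [this]
        calc |(2*(K:ℤ)+1)*i.2 + q.2| ≤ |(2*(K:ℤ)+1)*i.2| + |q.2| := abs_add_le _ _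
          _ = (2*(K:ℤ)+1)*|i.2| + |q.2| := by rw [abs_mul, abs_of_nonneg (by positivity : (0:ℤ) ≤ 2*(K:ℤ)+1)]
          _ ≤ (2*(K:ℤ)+1)*(t:ℤ) + K := by
              have : |i.2| ≤ (t:ℤ) := abs_le.mpr ⟨hi2, hi4⟩
              have h2 : (2*(K:ℤ)+1)*|i.2| ≤ (2*(K:ℤ)+1)*(t:ℤ) :=
                mul_le_mul_of_nonneg_left this (by positivity)
              omega
          _ ≤ ρ := htρ
      rw [hGd, Finset.mem_coe, Finset.mem_filter, Finset.mem_Icc]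
      have hbox1' := abs_le.mp hbox1
      have hbox2' := abs_le.mp hbox2
      refine ⟨⟨⟨hbox1'.1, hbox2'.1⟩, ⟨hbox1'.2, hbox2'.2⟩⟩, hboxQ _ hbox1 hbox2, ?_⟩
      exact exists_collision φ δ hcos hsin hbc hbs (g i) z hz1 hz2
    · intro i hi j hj hij
      obtain ⟨hqi1, hqi2, -⟩ := Classical.choose_spec (hK ((2*(K:ℤ)+1)*i.1, (2*(K:ℤ)+1)*i.2))
      obtain ⟨hqj1, hqj2, -⟩ := Classical.choose_spec (hK ((2*(K:ℤ)+1)*j.1, (2*(K:ℤ)+1)*j.2))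
      have h1 : (g i).1 = (g j).1 := by rw [hij]
      have h2 : (g i).2 = (g j).2 := by rw [hij]
      have e1 : (2*(K:ℤ)+1)*i.1 + (Classical.choose (hK ((2*(K:ℤ)+1)*i.1, (2*(K:ℤ)+1)*i.2))).1
          = (2*(K:ℤ)+1)*j.1 + (Classical.choose (hK ((2*(K:ℤ)+1)*j.1, (2*(K:ℤ)+1)*j.2))).1 := h1
      have e2 : (2*(K:ℤ)+1)*i.2 + (Classical.choose (hK ((2*(K:ℤ)+1)*i.1, (2*(K:ℤ)+1)*i.2))).2
          = (2*(K:ℤ)+1)*j.2 + (Classical.choose (hK ((2*(K:ℤ)+1)*j.1, (2*(K:ℤ)+1)*j.2))).2 := h2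
      exact Prod.ext (inj_helper (K:ℤ) i.1 j.1 _ _ hqi1 hqj1 e1)
        (inj_helper (K:ℤ) i.2 j.2 _ _ hqi2 hqj2 e2)
  -- parity split of Gd
  have hGdT : Gd ⊆ T := by
    intro p hp
    rw [hGd, Finset.mem_filter] at hp
    exact hQT p hp.2.1
  have hpar := parity_flip
  obtain ⟨W, hWGd, hWflip, hWcard⟩ :
      ∃ W : Finset (ℤ × ℤ), W ⊆ Gd ∧
        (∀ p ∈ W, ∀ v : ℤ × ℤ,
          (v = (1,0) ∨ v = (-1,0) ∨ v = (0,1) ∨ v = (0,-1)) → p + v ∉ W) ∧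
        Gd.card ≤ 2 * W.card := by
    set W0 := Gd.filter (fun p => (p.1+p.2) % 2 = 0) with hW0
    set W1 := Gd.filter (fun p => ¬((p.1+p.2) % 2 = 0)) with hW1
    have hsum : W0.card + W1.card = Gd.card :=
      Finset.card_filter_add_card_filter_not _
    rcases le_total W0.card W1.card with hle | hle
    · refine ⟨W1, Finset.filter_subset _ _, ?_, by omega⟩
      intro p hp v hv hcontra
      rw [hW1, Finset.mem_filter] at hp hcontra
      exact hcontra.2 ((hpar p v hv).mpr hp.2)
    · refine ⟨W0, Finset.filter_subset _ _, ?_, by omega⟩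
      intro p hp v hv hcontra
      rw [hW0, Finset.mem_filter] at hp hcontra
      exact ((hpar p v hv).mp hcontra.2) hp.2
  -- the set of hit points
  set Qhit := Q.filter (fun nm => ∃ ab : ℤ × ℤ, rphi φ ab = nm) with hQhitd
  have hsurj : Set.SurjOn (rphi φ) ↑(T \ W) ↑Qhit := by
    intro nm hnm
    have hnm' : nm ∈ Qhit := hnm
    rw [hQhitd, Finset.mem_filter] at hnm'
    obtain ⟨hnmQ, ab, hab⟩ := hnm'
    by_cases hmem : ab ∈ W
    · have habGd := hWGd hmem
      rw [hGd, Finset.mem_filter] at habGd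
      obtain ⟨-, -, v, hv, hcol⟩ := habGd
      refine ⟨ab + v, ?_, by rw [hcol, hab]⟩
      rw [Finset.mem_coe, Finset.mem_sdiff]
      exact ⟨hQT _ (by rw [hcol, hab]; exact hnmQ), hWflip ab hmem v hv⟩
    · refine ⟨ab, ?_, hab⟩
      rw [Finset.mem_coe, Finset.mem_sdiff]
      exact ⟨hQT _ (by rw [hab]; exact hnmQ), hmem⟩
  have hQhitcard : Qhit.card ≤ (T \ W).card := Finset.card_le_card_of_surjOn _ hsurj
  have hWT : W ⊆ T := fun p hp => hGdT (hWGd hp)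
  have hWTcard : W.card ≤ T.card := Finset.card_le_card hWT
  have hsdiff : (T \ W).card = T.card - W.card := Finset.card_sdiff_of_subset hWT
  -- Ncount splitting
  have hNsplit : Ncount φ M + Qhit.card = Q.card := by
    have h1 : Qhit = Q.filter (fun nm => ¬ ∀ ab : ℤ × ℤ, rphi φ ab ≠ nm) := by
      rw [hQhitd]
      apply Finset.filter_congr
      intro x _
      push_neg
      rfl
    have h2 := Finset.card_filter_add_card_filter_not
      (s := Q) (p := fun nm => ∀ ab : ℤ × ℤ, rphi φ ab ≠ nm)
    have h3 : Ncount φ M = (Q.filter (fun nm => ∀ ab : ℤ × ℤ, rphi φ ab ≠ nm)).card := by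
      rw [Ncount, hQ]
    rw [h3, h1]
    exact h2
  -- cast everything to the reals
  have hQhitR : (Qhit.card : ℝ) ≤ (T.card : ℝ) - W.card := by
    have h4 : Qhit.card ≤ T.card - W.card := by rw [← hsdiff]; exact hQhitcard
    have h5 := (Nat.cast_le (α := ℝ)).mpr h4
    rwa [Nat.cast_sub hWTcard] at h5
  have hNR : (Ncount φ M : ℝ) = (Q.card : ℝ) - Qhit.card := by
    have h6 := hNsplit
    have h7 : (Ncount φ M : ℝ) + (Qhit.card : ℝ) = (Q.card : ℝ) := by exact_mod_cast h6
    linarith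
  have hQcardR : (Q.card : ℝ) = (2*(M:ℝ)+1)^2 := by
    rw [hQcard]; push_cast; ring
  have hWR : (Gd.card : ℝ) ≤ 2 * (W.card : ℝ) := by exact_mod_cast hWcard
  have hGdR : (2*(t:ℝ)+1)^2 ≤ (Gd.card : ℝ) := by
    have := (Nat.cast_le (α := ℝ)).mpr hGdcard
    push_cast at this
    linarith
  constructor
  · -- lower bound
    have hN1 : (2*(M:ℝ)+1)^2 - (2*(M:ℝ)+5)^2 + (2*(t:ℝ)+1)^2/2 ≤ (Ncount φ M : ℝ) := by
      rw [hNR, hQcardR]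
      linarith
    have hfin := final_aux k (t:ℝ) (M:ℝ) hk1 ht0R hMR ht2R
    linarith
  · -- upper bound
    have hup : Ncount φ M ≤ Q.card := by
      rw [Ncount, hQ]
      exact Finset.card_filter_le _ _
    have hupR : (Ncount φ M : ℝ) ≤ (Q.card : ℝ) := Nat.cast_le.mpr hup
    have := upper_aux (M:ℝ) hM1
    rw [hQcardR] at hupR
    linarith
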